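/- Let V_1,...,V_r have sizes n_1,...,n_r with k ≤ n_1, let V_1' ⊆ V_1 with |V_1'| = n_1 − k + 1, and let G be obtained from the complete r-partite graph K(V_1,...,V_r) by deleting all edges between V_1' and V_2. Then G contains no k vertex-disjoint copies of K_r, and the number of s-cliques of G equals ∑_{A ⊆ [r], |A| = s, {1,2} ⊄ A} ∏_{i∈A} n_i + (k−1) n_2 ∑_{A ⊆ [3,r], |A| = s−2} ∏_{i∈A} n_i. -/

import Mathlib

/-- `H` (a family of finite edge sets) contains a matching of size `k`:
`k` pairwise disjoint edges. -/
def hasMatching {α : Type*} [DecidableEq α] (H : Finset (Finset α)) (k : ℕ) : Prop :=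
  ∃ M ⊆ H, M.card = k ∧ (M : Set (Finset α)).Pairwise Disjoint

/-- The edge set of the complete `r`-partite `s`-uniform hypergraph with parts
`V i = Fin (n i)`: all `s`-sets meeting each part in at most one vertex. -/
def crossEdges (r s : ℕ) (n : Fin r → ℕ) : Finset (Finset ((i : Fin r) × Fin (n i))) :=
  Finset.univ.filter fun S =>
    S.card = s ∧ ∀ i : Fin r, (S.filter fun v => v.1 = i).card ≤ 1

/-- `T` is a copy of `K_r^{(s)}` in the `s`-graph `H`: it is a transversal
(one vertex in each part) all of whose `s`-subsets are edges of `H`. -/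
def isKrCopy (r s : ℕ) (n : Fin r → ℕ) (H : Finset (Finset ((i : Fin r) × Fin (n i))))
    (T : Finset ((i : Fin r) × Fin (n i))) : Prop :=
  (∀ i : Fin r, (T.filter fun v => v.1 = i).card = 1) ∧ ∀ S ∈ T.powersetCard s, S ∈ H

/-- `H` contains `k` pairwise vertex-disjoint copies of `K_r^{(s)}`. -/
def hasKDisjointKr (r s k : ℕ) (n : Fin r → ℕ)
    (H : Finset (Finset ((i : Fin r) × Fin (n i)))) : Prop :=
  ∃ C : Finset (Finset ((i : Fin r) × Fin (n i))), C.card = k ∧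
    (∀ T ∈ C, isKrCopy r s n H T) ∧
    (C : Set (Finset ((i : Fin r) × Fin (n i)))).Pairwise Disjoint

/-- The number of `s`-cliques of the graph with edge set `H`
(an `s`-clique is an `s`-set all of whose `2`-subsets are edges). -/
def cliqueCount (r s : ℕ) (n : Fin r → ℕ)
    (H : Finset (Finset ((i : Fin r) × Fin (n i)))) : ℕ :=
  (Finset.univ.filter fun S : Finset ((i : Fin r) × Fin (n i)) =>
    S.card = s ∧ ∀ e ∈ S.powersetCard 2, e ∈ H).card

open Finset in
section
variable {r : ℕ} {n : Fin r → ℕ}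

lemma sigma_eq_of_fst_eq {i j : Fin r} (h : i = j) (x : Fin (n i)) :
    (⟨j, Fin.cast (congrArg n h) x⟩ : (i : Fin r) × Fin (n i)) = ⟨i, x⟩ := by
  subst h; rfl

lemma part_filter_card (i0 : Fin r) (V : Finset ((i : Fin r) × Fin (n i)))
    (hV : ∀ v ∈ V, v.1 = i0) :
    (Finset.univ.filter fun x : Fin (n i0) => (⟨i0, x⟩ : (i : Fin r) × Fin (n i)) ∈ V).card
      = V.card := by
  apply Finset.card_bij (fun x _ => (⟨i0, x⟩ : (i : Fin r) × Fin (n i)))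
  · intro x hx; exact (Finset.mem_filter.1 hx).2
  · intro x _ y _ h
    exact congrArg Fin.val (eq_of_heq (Sigma.mk.inj_iff.1 h).2) |> Fin.ext
  · intro v hv
    refine ⟨Fin.cast (congrArg n (hV v hv)) v.2, ?_, ?_⟩
    · rw [Finset.mem_filter]
      refine ⟨Finset.mem_univ _, ?_⟩
      rw [sigma_eq_of_fst_eq (hV v hv) v.2, Sigma.eta]
      exact hv
    · rw [sigma_eq_of_fst_eq (hV v hv) v.2, Sigma.eta]

lemma part_card (i0 : Fin r) :
    (Finset.univ.filter fun v : (i : Fin r) × Fin (n i) => v.1 = i0).card = n i0 := by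
  have : (Finset.univ.filter fun v : (i : Fin r) × Fin (n i) => v.1 = i0)
      = Finset.univ.image (Sigma.mk i0) := by
    ext v
    simp only [Finset.mem_filter, Finset.mem_univ, true_and, Finset.mem_image]
    constructor
    · intro h
      exact ⟨Fin.cast (congrArg n h) v.2, by rw [sigma_eq_of_fst_eq h v.2, Sigma.eta]⟩
    · rintro ⟨x, rfl⟩; rfl
  rw [this, Finset.card_image_of_injective _ sigma_mk_injective, Finset.card_univ,
    Fintype.card_fin]


lemma transversal_count (A : Finset (Fin r)) (D : ∀ i : Fin r, Finset (Fin (n i))) :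
    (Finset.univ.filter fun S : Finset ((i : Fin r) × Fin (n i)) =>
      S.image Sigma.fst = A ∧ S.card = A.card ∧ ∀ v ∈ S, v.2 ∈ D v.1).card
    = ∏ i ∈ A, (D i).card := by
  rw [← Finset.card_pi]
  have huniq : ∀ (S : Finset ((i : Fin r) × Fin (n i))), S ∈ (Finset.univ.filter fun S =>
      S.image Sigma.fst = A ∧ S.card = A.card ∧ ∀ v ∈ S, v.2 ∈ D v.1) →
      ∀ i ∈ A, ∃! v, v ∈ S ∧ v.1 = i := by
    intro S hS i hi
    obtain ⟨-, hSA, hcard, -⟩ := Finset.mem_filter.1 hS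
    have hinj : Set.InjOn Sigma.fst (S : Set ((i : Fin r) × Fin (n i))) :=
      Finset.card_image_iff.1 (by rw [hSA, hcard])
    rw [← hSA] at hi
    obtain ⟨v, hv, hv1⟩ := Finset.mem_image.1 hi
    exact ⟨v, ⟨hv, hv1⟩, fun w hw => hinj hw.1 hv (hw.2.trans hv1.symm)⟩
  have hjmem : ∀ g ∈ A.pi D, A.attach.image
      (fun a : {x // x ∈ A} => (⟨a.1, g a.1 a.2⟩ : (i : Fin r) × Fin (n i)))
      ∈ (Finset.univ.filter fun S : Finset ((i : Fin r) × Fin (n i)) =>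
      S.image Sigma.fst = A ∧ S.card = A.card ∧ ∀ v ∈ S, v.2 ∈ D v.1) := by
    intro g hg
    rw [Finset.mem_pi] at hg
    refine Finset.mem_filter.2 ⟨Finset.mem_univ _, ?_, ?_, ?_⟩
    · rw [Finset.image_image]
      ext i
      simp only [Finset.mem_image, Function.comp]
      exact ⟨fun ⟨a, _, h⟩ => h ▸ a.2, fun hi => ⟨⟨i, hi⟩, Finset.mem_attach _ _, rfl⟩⟩
    · rw [Finset.card_image_of_injOn (fun a _ b _ h => Subtype.ext (congrArg Sigma.fst h)),
        Finset.card_attach]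
    · intro v hv
      obtain ⟨a, -, rfl⟩ := Finset.mem_image.1 hv
      exact hg a.1 a.2
  refine Finset.card_bij' (fun S hS => fun i hi =>
      Fin.cast (congrArg n (Finset.choose_property (fun v => v.1 = i) S (huniq S hS i hi)))
        (Finset.choose (fun v => v.1 = i) S (huniq S hS i hi)).2)
    (fun g _ => A.attach.image (fun a => ⟨a.1, g a.1 a.2⟩)) ?_ ?_ ?_ ?_
  · -- maps into pi
    intro S hS
    rw [Finset.mem_pi]
    intro i hi
    have hD := (Finset.mem_filter.1 hS).2.2.2
    have hmem := Finset.choose_mem (fun v => v.1 = i) S (huniq S hS i hi)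
    have hkey := sigma_eq_of_fst_eq
      (Finset.choose_property (fun v => v.1 = i) S (huniq S hS i hi)) ((Finset.choose _ S _).2)
    rw [Sigma.eta] at hkey
    have := hD _ hmem
    rw [← hkey] at this
    simpa using this
  · exact fun g hg => hjmem g hg
  · -- left inverse
    intro S hS
    obtain ⟨-, hSA, hcard, -⟩ := Finset.mem_filter.1 hS
    have hsub : A.attach.image (fun a : {x // x ∈ A} =>
        (⟨a.1, Fin.cast (congrArg n (Finset.choose_property (fun v => v.1 = a.1) S
          (huniq S hS a.1 a.2))) (Finset.choose (fun v => v.1 = a.1) S (huniq S hS a.1 a.2)).2⟩ :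
          (i : Fin r) × Fin (n i))) ⊆ S := by
      intro v hv
      obtain ⟨a, -, rfl⟩ := Finset.mem_image.1 hv
      have hkey := sigma_eq_of_fst_eq
        (Finset.choose_property (fun v => v.1 = a.1) S (huniq S hS a.1 a.2))
        ((Finset.choose _ S _).2)
      rw [Sigma.eta] at hkey
      rw [hkey]
      exact Finset.choose_mem _ _ _
    refine Finset.eq_of_subset_of_card_le hsub ?_
    rw [Finset.card_image_of_injOn (fun a _ b _ h => Subtype.ext (congrArg Sigma.fst h)),
      Finset.card_attach, hcard]
  · -- right inverse
    intro g hg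
    funext i hi
    have hT := hjmem g hg
    have hu := huniq _ hT i hi
    have hvT := Finset.choose_mem (fun v : (j : Fin r) × Fin (n j) => v.1 = i) _ hu
    have hv1 := Finset.choose_property (fun v : (j : Fin r) × Fin (n j) => v.1 = i) _ hu
    obtain ⟨a, -, ha⟩ := Finset.mem_image.1 hvT
    have ha1 : a.1 = i := by rw [← hv1, ← ha]
    have haa : a = ⟨i, hi⟩ := Subtype.ext ha1
    subst haa
    rw [Fin.ext_iff, Fin.coe_cast, ← ha]


set_option maxHeartbeats 1000000 in
lemma no_kr (hr : 2 ≤ r) (k : ℕ) (hk : 1 ≤ k)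
    (hkn : k ≤ n ⟨0, by omega⟩)
    (V1' : Finset ((i : Fin r) × Fin (n i))) (hV1 : ∀ v ∈ V1', v.1.val = 0)
    (hV1card : V1'.card = n ⟨0, by omega⟩ - k + 1)
    (G : Finset (Finset ((i : Fin r) × Fin (n i))))
    (hG : ∀ e ∈ G, ¬ ∃ u ∈ e, ∃ w ∈ e, u ∈ V1' ∧ w.1.val = 1) :
    ¬ hasKDisjointKr r 2 k n G := by
  classical
  set i0 : Fin r := ⟨0, by omega⟩ with hi0
  set i1 : Fin r := ⟨1, by omega⟩ with hi1
  rintro ⟨C, hCcard, hCcopy, hCdisj⟩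
  have hex : ∀ T ∈ C, ∃ u, u ∈ T ∧ u.1 = i0 ∧ u ∉ V1' := by
    intro T hT
    obtain ⟨htrans, hedge⟩ := hCcopy T hT
    obtain ⟨u, hu⟩ := Finset.card_eq_one.1 (htrans i0)
    obtain ⟨w, hw⟩ := Finset.card_eq_one.1 (htrans i1)
    have huT : u ∈ T ∧ u.1 = i0 := by
      have := hu ▸ Finset.mem_singleton_self u
      exact Finset.mem_filter.1 this |>.imp id id
    have hwT : w ∈ T ∧ w.1 = i1 := by
      have := hw ▸ Finset.mem_singleton_self w
      exact Finset.mem_filter.1 this |>.imp id id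
    have hne : u ≠ w := by
      intro h
      rw [h, hwT.2] at huT
      exact absurd (congrArg Fin.val huT.2) (by simp [hi0, hi1])
    have hpair : ({u, w} : Finset ((i : Fin r) × Fin (n i))) ∈ T.powersetCard 2 :=
      Finset.mem_powersetCard.2 ⟨Finset.insert_subset huT.1 (Finset.singleton_subset_iff.2 hwT.1),
        Finset.card_pair hne⟩
    refine ⟨u, huT.1, huT.2, fun huV => ?_⟩
    exact hG _ (hedge _ hpair) ⟨u, Finset.mem_insert_self _ _,
      w, Finset.mem_insert_of_mem (Finset.mem_singleton_self w), huV, by rw [hwT.2]⟩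
  have hn0 : 0 < n i0 := lt_of_lt_of_le hk hkn
  set f : Finset ((i : Fin r) × Fin (n i)) → (i : Fin r) × Fin (n i) :=
    fun T => if h : ∃ u, u ∈ T ∧ u.1 = i0 ∧ u ∉ V1' then h.choose else ⟨i0, ⟨0, hn0⟩⟩ with hf
  have hfspec : ∀ T ∈ C, f T ∈ T ∧ (f T).1 = i0 ∧ f T ∉ V1' := by
    intro T hT
    rw [hf]
    dsimp only
    rw [dif_pos (hex T hT)]
    exact (hex T hT).choose_spec
  have hle : C.card ≤ ((Finset.univ.filter fun v : (i : Fin r) × Fin (n i) => v.1 = i0)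
      \ V1').card := by
    apply Finset.card_le_card_of_injOn f
    · intro T hT
      obtain ⟨h1, h2, h3⟩ := hfspec T hT
      exact Finset.mem_sdiff.2 ⟨Finset.mem_filter.2 ⟨Finset.mem_univ _, h2⟩, h3⟩
    · intro T hT T' hT' hff
      by_contra hne
      have hd := hCdisj hT hT' hne
      exact Finset.disjoint_left.1 hd (hfspec T hT).1 (hff ▸ (hfspec T' hT').1)
  have hsub : V1' ⊆ Finset.univ.filter fun v : (i : Fin r) × Fin (n i) => v.1 = i0 := by
    intro v hv
    exact Finset.mem_filter.2 ⟨Finset.mem_univ _, Fin.ext (hV1 v hv)⟩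
  rw [Finset.card_sdiff_of_subset hsub, part_card, hCcard, hV1card] at hle
  omega


lemma count_eq (s k : ℕ) (hs : 2 ≤ s) (hsr : s ≤ r) (hk : 1 ≤ k)
    (i0 i1 : Fin r) (h0 : i0.val = 0) (h1 : i1.val = 1) (hkn : k ≤ n i0)
    (V1' : Finset ((i : Fin r) × Fin (n i))) (hV1 : ∀ v ∈ V1', v.1.val = 0)
    (hV1card : V1'.card = n i0 - k + 1) :
    (Finset.univ.filter fun S : Finset ((i : Fin r) × Fin (n i)) =>
      S.card = s ∧ ∀ e ∈ S.powersetCard 2, e ∈ (crossEdges r 2 n).filter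
        fun e => ¬ ∃ u ∈ e, ∃ w ∈ e, u ∈ V1' ∧ w.1.val = 1).card
    = ∑ A ∈ ((Finset.univ : Finset (Fin r)).powersetCard s).filter
          (fun A => ¬(i0 ∈ A ∧ i1 ∈ A)), ∏ i ∈ A, n i
      + (k - 1) * n i1 *
        ∑ A ∈ (Finset.univ.filter fun i : Fin r => 2 ≤ i.val).powersetCard (s - 2),
          ∏ i ∈ A, n i := by
  set G : Finset (Finset ((i : Fin r) × Fin (n i))) := (crossEdges r 2 n).filter
      (fun e => ¬ ∃ u ∈ e, ∃ w ∈ e, u ∈ V1' ∧ w.1.val = 1) with hGdef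
  have hne10 : i1 ≠ i0 := by intro h; rw [h, h0] at h1; omega
  have hGmem : ∀ e, e ∈ G ↔ ((e.card = 2 ∧ ∀ i : Fin r, (e.filter fun v => v.1 = i).card ≤ 1)
      ∧ ¬ ∃ u ∈ e, ∃ w ∈ e, u ∈ V1' ∧ w.1.val = 1) := by
    intro e
    rw [hGdef, Finset.mem_filter, crossEdges, Finset.mem_filter]
    simp only [Finset.mem_univ, true_and]
  -- characterization of cliques
  have hchar : ∀ S : Finset ((i : Fin r) × Fin (n i)),
      (S.card = s ∧ ∀ e ∈ S.powersetCard 2, e ∈ G) ↔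
      (S.card = s ∧ (∀ v ∈ S, ∀ w ∈ S, v ≠ w → v.1 ≠ w.1)
        ∧ ¬ ∃ u ∈ S, ∃ w ∈ S, u ∈ V1' ∧ w.1.val = 1) := by
    intro S
    constructor
    · rintro ⟨hcard, hcl⟩
      refine ⟨hcard, ?_, ?_⟩
      · intro v hv w hw hne heq
        have hpair : ({v, w} : Finset _) ∈ S.powersetCard 2 :=
          Finset.mem_powersetCard.2
            ⟨Finset.insert_subset hv (Finset.singleton_subset_iff.2 hw), Finset.card_pair hne⟩
        obtain ⟨⟨-, hcross⟩, -⟩ := (hGmem _).1 (hcl _ hpair)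
        have h2 : ({v, w} : Finset _) ⊆ ({v, w} : Finset _).filter (fun x => x.1 = v.1) := by
          intro x hx
          rcases Finset.mem_insert.1 hx with rfl | hx
          · exact Finset.mem_filter.2 ⟨hx, rfl⟩
          · exact Finset.mem_filter.2 ⟨Finset.mem_insert_of_mem hx,
              (Finset.mem_singleton.1 hx) ▸ heq.symm⟩
        have := (Finset.card_le_card h2).trans (hcross v.1)
        rw [Finset.card_pair hne] at this
        omega
      · rintro ⟨u, hu, w, hw, huV, hw1⟩
        have hne : u ≠ w := by
          intro h
          have h2 := hV1 u huV
          rw [h, hw1] at h2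
          omega
        have hpair : ({u, w} : Finset _) ∈ S.powersetCard 2 :=
          Finset.mem_powersetCard.2
            ⟨Finset.insert_subset hu (Finset.singleton_subset_iff.2 hw), Finset.card_pair hne⟩
        exact ((hGmem _).1 (hcl _ hpair)).2 ⟨u, Finset.mem_insert_self _ _,
          w, Finset.mem_insert_of_mem (Finset.mem_singleton_self w), huV, hw1⟩
    · rintro ⟨hcard, hparts, hbad⟩
      refine ⟨hcard, fun e he => (hGmem e).2 ⟨⟨?_, ?_⟩, ?_⟩⟩
      · exact (Finset.mem_powersetCard.1 he).2
      · intro i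
        apply Finset.card_le_one.2
        intro a ha b hb
        obtain ⟨haE, hai⟩ := Finset.mem_filter.1 ha
        obtain ⟨hbE, hbi⟩ := Finset.mem_filter.1 hb
        by_contra hne
        exact hparts a ((Finset.mem_powersetCard.1 he).1 haE)
          b ((Finset.mem_powersetCard.1 he).1 hbE) hne (hai.trans hbi.symm)
      · rintro ⟨u, hu, w, hw, h⟩
        exact hbad ⟨u, (Finset.mem_powersetCard.1 he).1 hu,
          w, (Finset.mem_powersetCard.1 he).1 hw, h⟩
  -- fiberwise count
  have hmapsto : ∀ S ∈ (Finset.univ.filter fun S : Finset ((i : Fin r) × Fin (n i)) =>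
      S.card = s ∧ ∀ e ∈ S.powersetCard 2, e ∈ G),
      S.image Sigma.fst ∈ (Finset.univ : Finset (Fin r)).powersetCard s := by
    intro S hS
    obtain ⟨hcard, hparts, -⟩ := (hchar S).1 (Finset.mem_filter.1 hS).2
    refine Finset.mem_powersetCard.2 ⟨Finset.subset_univ _, ?_⟩
    rw [Finset.card_image_of_injOn, hcard]
    intro v hv w hw h
    by_contra hne
    exact hparts v hv w hw hne h
  rw [Finset.card_eq_sum_card_fiberwise hmapsto]
  rw [← Finset.sum_filter_add_sum_filter_not ((Finset.univ : Finset (Fin r)).powersetCard s)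
    (fun A => ¬(i0 ∈ A ∧ i1 ∈ A))]
  congr 1
  -- first part: A not containing both i0, i1
  · apply Finset.sum_congr rfl
    intro A hA
    obtain ⟨hA1, hA2⟩ := Finset.mem_filter.1 hA
    have hAcard : A.card = s := (Finset.mem_powersetCard.1 hA1).2
    have hfib : ((Finset.univ.filter fun S : Finset ((i : Fin r) × Fin (n i)) =>
        S.card = s ∧ ∀ e ∈ S.powersetCard 2, e ∈ G).filter
          fun S => S.image Sigma.fst = A)
        = Finset.univ.filter fun S : Finset ((i : Fin r) × Fin (n i)) =>
          S.image Sigma.fst = A ∧ S.card = A.card ∧ ∀ v ∈ S, v.2 ∈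
            (Finset.univ : Finset (Fin (n v.1))) := by
      ext S
      simp only [Finset.mem_filter, Finset.mem_univ, true_and]
      constructor
      · rintro ⟨⟨hcard, -⟩, himg⟩
        exact ⟨himg, by rw [hcard, hAcard], fun v _ => trivial⟩
      · rintro ⟨himg, hcardA, -⟩
        have hcard : S.card = s := by rw [hcardA, hAcard]
        have hinj : Set.InjOn Sigma.fst (S : Set ((i : Fin r) × Fin (n i))) :=
          Finset.card_image_iff.1 (by rw [himg, hcardA])
        refine ⟨(hchar S).2 ⟨hcard, ?_, ?_⟩, himg⟩
        · intro v hv w hw hne heq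
          exact hne (hinj hv hw heq)
        · rintro ⟨u, hu, w, hw, huV, hw1⟩
          rcases not_and_or.1 hA2 with h | h
          · apply h
            have hu1 : u.1 = i0 := Fin.ext (by rw [hV1 u huV, h0])
            rw [← himg, ← hu1]
            exact Finset.mem_image_of_mem Sigma.fst hu
          · apply h
            have hw1' : w.1 = i1 := Fin.ext (by rw [hw1, h1])
            rw [← himg, ← hw1']
            exact Finset.mem_image_of_mem Sigma.fst hw
    rw [hfib, transversal_count A (fun i => (Finset.univ : Finset (Fin (n i))))]
    apply Finset.prod_congr rfl
    intro i _
    rw [Finset.card_univ, Fintype.card_fin]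
  -- second part
  · have hnn : (((Finset.univ : Finset (Fin r)).powersetCard s).filter
        fun A => ¬¬(i0 ∈ A ∧ i1 ∈ A))
        = (((Finset.univ : Finset (Fin r)).powersetCard s).filter
        fun A => (i0 ∈ A ∧ i1 ∈ A)) :=
      Finset.filter_congr (fun x _ => not_not)
    rw [hnn]
    -- per-A fiber count
    have hterm : ∀ A ∈ (((Finset.univ : Finset (Fin r)).powersetCard s).filter
        fun A => (i0 ∈ A ∧ i1 ∈ A)),
        ((Finset.univ.filter fun S : Finset ((i : Fin r) × Fin (n i)) =>
          S.card = s ∧ ∀ e ∈ S.powersetCard 2, e ∈ G).filter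
            fun S => S.image Sigma.fst = A).card
        = (k - 1) * (n i1 * ∏ i ∈ (A.erase i0).erase i1, n i) := by
      intro A hA
      obtain ⟨hA1, hAi0, hAi1⟩ := Finset.mem_filter.1 hA |>.imp id id
      have hAcard : A.card = s := (Finset.mem_powersetCard.1 hA1).2
      have hfib : ((Finset.univ.filter fun S : Finset ((i : Fin r) × Fin (n i)) =>
          S.card = s ∧ ∀ e ∈ S.powersetCard 2, e ∈ G).filter
            fun S => S.image Sigma.fst = A)
          = Finset.univ.filter fun S : Finset ((i : Fin r) × Fin (n i)) =>
            S.image Sigma.fst = A ∧ S.card = A.card ∧ ∀ v ∈ S, v.2 ∈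
              (Finset.univ.filter fun x : Fin (n v.1) =>
                (⟨v.1, x⟩ : (i : Fin r) × Fin (n i)) ∉ V1') := by
        ext S
        simp only [Finset.mem_filter, Finset.mem_univ, true_and]
        constructor
        · rintro ⟨⟨hcard, hcl⟩, himg⟩
          refine ⟨himg, by rw [hcard, hAcard], ?_⟩
          intro v hv
          obtain ⟨-, -, hbad⟩ := (hchar S).1 ⟨hcard, hcl⟩
          obtain ⟨w, hwS, hwi⟩ := Finset.mem_image.1 (himg ▸ hAi1)
          intro hvV
          rw [Sigma.eta] at hvV
          exact hbad ⟨v, hv, w, hwS, hvV, by rw [hwi, h1]⟩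
        · rintro ⟨himg, hcardA, hD⟩
          have hcard : S.card = s := by rw [hcardA, hAcard]
          have hinj : Set.InjOn Sigma.fst (S : Set ((i : Fin r) × Fin (n i))) :=
            Finset.card_image_iff.1 (by rw [himg, hcardA])
          refine ⟨⟨hcard, ((hchar S).2 ⟨hcard, ?_, ?_⟩).2⟩, himg⟩
          · intro v hv w hw hne heq
            exact hne (hinj hv hw heq)
          · rintro ⟨u, hu, w, hw, huV, -⟩
            have h4 := hD u hu
            rw [Sigma.eta] at h4
            exact h4 huV
      rw [hfib, transversal_count A (fun i => Finset.univ.filter fun x : Fin (n i) =>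
        (⟨i, x⟩ : (i : Fin r) × Fin (n i)) ∉ V1')]
      -- evaluate the product
      have hD0 : (Finset.univ.filter fun x : Fin (n i0) =>
          (⟨i0, x⟩ : (i : Fin r) × Fin (n i)) ∉ V1').card = k - 1 := by
        have hcnt := part_filter_card i0 V1' (fun v hv => Fin.ext (by rw [hV1 v hv, h0]))
        have hsp := Finset.card_filter_add_card_filter_not
          (s := (Finset.univ : Finset (Fin (n i0))))
          (p := fun x => (⟨i0, x⟩ : (i : Fin r) × Fin (n i)) ∈ V1')
        beta_reduce at hsp
        rw [Finset.card_univ, Fintype.card_fin] at hsp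
        omega
      have hDi : ∀ i : Fin r, i ≠ i0 → (Finset.univ.filter fun x : Fin (n i) =>
          (⟨i, x⟩ : (i : Fin r) × Fin (n i)) ∉ V1').card = n i := by
        intro i hi
        have heq : (Finset.univ.filter fun x : Fin (n i) =>
            (⟨i, x⟩ : (i : Fin r) × Fin (n i)) ∉ V1') = Finset.univ :=
          Finset.filter_true_of_mem (fun x _ => fun hx => hi (Fin.ext (by
            rw [h0]; exact hV1 _ hx)))
        rw [heq, Finset.card_univ, Fintype.card_fin]
      rw [← Finset.mul_prod_erase A _ hAi0,
        ← Finset.mul_prod_erase (A.erase i0) _ (Finset.mem_erase.2 ⟨hne10, hAi1⟩),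
        hD0, hDi i1 hne10]
      congr 1
      congr 1
      apply Finset.prod_congr rfl
      intro i hi
      have h2 := Finset.mem_erase.1 hi
      have h3 := Finset.mem_erase.1 h2.2
      exact hDi i h3.1
    rw [Finset.sum_congr rfl hterm, ← Finset.mul_sum, ← Finset.mul_sum, ← mul_assoc]
    congr 1
    apply Finset.sum_nbij' (i := fun A => (A.erase i0).erase i1)
      (j := fun B => insert i0 (insert i1 B))
    · intro A hA
      obtain ⟨hA1, hAi0, hAi1⟩ := Finset.mem_filter.1 hA |>.imp id id
      have hAcard : A.card = s := (Finset.mem_powersetCard.1 hA1).2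
      refine Finset.mem_powersetCard.2 ⟨?_, ?_⟩
      · intro i hi
        have h2 := Finset.mem_erase.1 hi
        have h3 := Finset.mem_erase.1 h2.2
        refine Finset.mem_filter.2 ⟨Finset.mem_univ _, ?_⟩
        have hv0 : i.val ≠ 0 := fun h => h3.1 (Fin.ext (by rw [h, h0]))
        have hv1 : i.val ≠ 1 := fun h => h2.1 (Fin.ext (by rw [h, h1]))
        omega
      · rw [Finset.card_erase_of_mem (Finset.mem_erase.2 ⟨hne10, hAi1⟩),
          Finset.card_erase_of_mem hAi0, hAcard]
        omega
    · intro B hB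
      obtain ⟨hBsub, hBcard⟩ := Finset.mem_powersetCard.1 hB
      have hi1B : i1 ∉ B := fun h => by
        have := (Finset.mem_filter.1 (hBsub h)).2; omega
      have hi0B : i0 ∉ insert i1 B := by
        rw [Finset.mem_insert]
        rintro (h | h)
        · exact hne10 h.symm
        · have := (Finset.mem_filter.1 (hBsub h)).2; omega
      refine Finset.mem_filter.2 ⟨Finset.mem_powersetCard.2 ⟨Finset.subset_univ _, ?_⟩,
        Finset.mem_insert_self _ _, Finset.mem_insert_of_mem (Finset.mem_insert_self _ _)⟩
      rw [Finset.card_insert_of_notMem hi0B, Finset.card_insert_of_notMem hi1B, hBcard]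
      omega
    · intro A hA
      obtain ⟨hA1, hAi0, hAi1⟩ := Finset.mem_filter.1 hA |>.imp id id
      rw [Finset.insert_erase (Finset.mem_erase.2 ⟨hne10, hAi1⟩), Finset.insert_erase hAi0]
    · intro B hB
      obtain ⟨hBsub, hBcard⟩ := Finset.mem_powersetCard.1 hB
      have hi1B : i1 ∉ B := fun h => by
        have := (Finset.mem_filter.1 (hBsub h)).2; omega
      have hi0B : i0 ∉ insert i1 B := by
        rw [Finset.mem_insert]
        rintro (h | h)
        · exact hne10 h.symm
        · have := (Finset.mem_filter.1 (hBsub h)).2; omega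
      rw [Finset.erase_insert hi0B, Finset.erase_insert hi1B]
    · intro A hA
      rfl

end

theorem stmt17 (r s k : ℕ) (hs : 2 ≤ s) (hsr : s ≤ r) (hk : 1 ≤ k) (n : Fin r → ℕ)
    (hkn : k ≤ n ⟨0, by omega⟩)
    (V1' : Finset ((i : Fin r) × Fin (n i))) (hV1 : ∀ v ∈ V1', v.1.val = 0)
    (hV1card : V1'.card = n ⟨0, by omega⟩ - k + 1) :
    -- `G` = complete multipartite graph minus all edges between `V1'` and `V_2`
    let G : Finset (Finset ((i : Fin r) × Fin (n i))) :=
      (crossEdges r 2 n).filter fun e => ¬ ∃ u ∈ e, ∃ w ∈ e, u ∈ V1' ∧ w.1.val = 1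
    ¬ hasKDisjointKr r 2 k n G ∧
    cliqueCount r s n G
      = ∑ A ∈ ((Finset.univ : Finset (Fin r)).powersetCard s).filter
            (fun A => ¬((⟨0, by omega⟩ : Fin r) ∈ A ∧ (⟨1, by omega⟩ : Fin r) ∈ A)),
          ∏ i ∈ A, n i
        + (k - 1) * n ⟨1, by omega⟩ *
          ∑ A ∈ (Finset.univ.filter fun i : Fin r => 2 ≤ i.val).powersetCard (s - 2),
            ∏ i ∈ A, n i := by
  intro G
  refine ⟨?_, ?_⟩
  · exact no_kr (by omega) k hk hkn V1' hV1 hV1card G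
      (fun e he => (Finset.mem_filter.1 he).2)
  · exact count_eq s k hs hsr hk ⟨0, by omega⟩ ⟨1, by omega⟩ rfl rfl hkn V1' hV1 hV1card
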